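/- Let F be a finite field with p^f > 3 elements, q an odd prime dividing p^f - 1, and B = ⟨b⟩ cyclic of order q. The unitary subgroup V₋(FB) = {u ∈ V(FB) : u* = u^{-1}} has order (p^f - 1)^((q-1)/2), and is isomorphic to the direct product of (q-1)/2 copies of the cyclic group of order p^f - 1. -/

import Mathlib

open MonoidAlgebra

noncomputable def aug (F : Type*) [CommSemiring F] (G : Type*) [Monoid G] :
    MonoidAlgebra F G →ₐ[F] F := MonoidAlgebra.lift F F G 1

noncomputable def invo (F : Type*) [CommSemiring F] (G : Type*) [Group G] :
    MonoidAlgebra F G → MonoidAlgebra F G := fun x => MonoidAlgebra.mapDomain (·⁻¹) x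

noncomputable def normUnits (F : Type*) [CommSemiring F] (G : Type*) [Monoid G] :
    Subgroup (MonoidAlgebra F G)ˣ :=
  (Units.map (aug F G : MonoidAlgebra F G →* F)).ker

noncomputable def grpUnit (F : Type*) [CommSemiring F] (G : Type*) [Group G] :
    G →* (MonoidAlgebra F G)ˣ where
  toFun g :=
    { val := MonoidAlgebra.of F G g
      inv := MonoidAlgebra.of F G g⁻¹
      val_inv := by rw [← map_mul, mul_inv_cancel, map_one]
      inv_val := by rw [← map_mul, inv_mul_cancel, map_one] }
  map_one' := Units.ext (map_one (MonoidAlgebra.of F G))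
  map_mul' g h := Units.ext (map_mul (MonoidAlgebra.of F G) g h)

/-- Units of a pi type. -/
noncomputable def piUnitsEquiv {ι : Type*} {M : ι → Type*} [∀ i, Monoid (M i)] :
    (∀ i, M i)ˣ ≃* ∀ i, (M i)ˣ where
  toFun u i := ⟨u.val i, u.inv i, congrFun u.val_inv i, congrFun u.inv_val i⟩
  invFun v := ⟨fun i => v i, fun i => ((v i)⁻¹ : (M i)ˣ), funext fun i => (v i).val_inv,
    funext fun i => (v i).inv_val⟩
  left_inv _ := Units.ext rfl
  right_inv _ := funext fun _ => Units.ext rfl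
  map_mul' _ _ := funext fun _ => Units.ext rfl

lemma pow_mod_of_pow_eq_one {G : Type*} [Monoid G] {g : G} {q : ℕ} (h : g ^ q = 1) (x : ℕ) :
    g ^ (x % q) = g ^ x := by
  conv_rhs => rw [← Nat.div_add_mod x q]
  rw [pow_add, pow_mul, h, one_pow, one_mul]

/-- The homomorphism `Multiplicative (ZMod q) →* G` sending `1` to an element `ζ` with
`ζ ^ q = 1`. -/
noncomputable def zmodPowHom (q : ℕ) [NeZero q] {G : Type*} [Group G] (ζ : G) (hζ : ζ ^ q = 1) :
    Multiplicative (ZMod q) →* G where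
  toFun k := ζ ^ (Multiplicative.toAdd k).val
  map_one' := by
    show ζ ^ (Multiplicative.toAdd (1 : Multiplicative (ZMod q))).val = 1
    rw [toAdd_one, ZMod.val_zero, pow_zero]
  map_mul' a b := by
    show ζ ^ ((Multiplicative.toAdd a) + (Multiplicative.toAdd b)).val = _
    rw [ZMod.val_add, pow_mod_of_pow_eq_one hζ, pow_add]

section Phi

variable (F : Type*) [Field F] {B : Type*} [Group B] [Fintype B] (q : ℕ)
  (χ : B →* Fˣ)

/-- The Fourier-type evaluation homomorphism. -/
noncomputable def Phi : MonoidAlgebra F B →ₐ[F] (ZMod q → F) :=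
  Pi.algHom (R := F) (A := fun _ : ZMod q => F)
    (fun k => MonoidAlgebra.lift F F B ((Units.coeHom F).comp (χ ^ (k.val))))

lemma Phi_single (b : B) (r : F) (k : ZMod q) :
    Phi F q χ (MonoidAlgebra.single b r) k = r * ((χ b : F)) ^ k.val := by
  simp [Phi, MonoidAlgebra.lift_single, Units.val_pow_eq_pow_val, smul_eq_mul]

lemma Phi_apply (x : MonoidAlgebra F B) (k : ZMod q) :
    Phi F q χ x k = ∑ b : B, x.coeff b * (χ b : F) ^ k.val := by
  classical
  have : Phi F q χ x k = x.coeff.sum fun a c => c * ((χ a : F)) ^ k.val := by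
    simp [Phi, MonoidAlgebra.lift_apply, smul_eq_mul, Units.val_pow_eq_pow_val,
      Finsupp.sum_apply]
  rw [this, Finsupp.sum_fintype]
  intro b
  exact zero_mul _

lemma Phi_zero_eq_aug [NeZero q] (x : MonoidAlgebra F B) :
    Phi F q χ x 0 = aug F B x := by
  have h1 : (Units.coeHom F).comp (χ ^ (0 : ZMod q).val) = 1 := by
    rw [ZMod.val_zero]
    ext b
    simp
  show (MonoidAlgebra.lift F F B ((Units.coeHom F).comp (χ ^ (0 : ZMod q).val))) x = _
  rw [h1]
  rfl

lemma Phi_invo [NeZero q] (hord : ∀ b : B, (χ b) ^ q = 1) (x : MonoidAlgebra F B) (k : ZMod q) :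
    Phi F q χ (invo F B x) k = Phi F q χ x (-k) := by
  induction x using MonoidAlgebra.induction_linear with
  | zero => simp [invo]
  | add f g hf hg =>
    have : invo F B (f + g) = invo F B f + invo F B g := MonoidAlgebra.mapDomain_add _ _ _
    rw [this, map_add, map_add, Pi.add_apply, Pi.add_apply, hf, hg]
  | single b r =>
    have : invo F B (MonoidAlgebra.single b r) = MonoidAlgebra.single b⁻¹ r :=
      MonoidAlgebra.mapDomain_single
    rw [this, Phi_single, Phi_single]
    congr 1
    have hw : (χ b) ^ ((-k).val + k.val) = 1 := by
      obtain ⟨c, hc⟩ : q ∣ (-k).val + k.val := by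
        rw [← ZMod.natCast_eq_zero_iff, Nat.cast_add,
          ZMod.natCast_rightInverse (-k), ZMod.natCast_rightInverse k, neg_add_cancel]
      rw [hc, pow_mul, hord b, one_pow]
    have key : (χ b)⁻¹ ^ k.val = (χ b) ^ (-k).val := by
      rw [inv_pow]
      exact (eq_inv_of_mul_eq_one_left (by rw [← pow_add, hw])).symm
    rw [map_inv, ← Units.val_pow_eq_pow_val, ← Units.val_pow_eq_pow_val, key]

lemma Phi_bijective [NeZero q] (e : Multiplicative (ZMod q) ≃* B) (ζ : Fˣ)
    (hζ : orderOf ζ = q) (hχ : ∀ k : ZMod q, χ (e (Multiplicative.ofAdd k)) = ζ ^ k.val) :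
    Function.Bijective (Phi F q χ) := by
  classical
  -- reindexing equivalences
  let ι : Fin q ≃ ZMod q :=
    { toFun := fun i => ((i : ℕ) : ZMod q)
      invFun := fun k => ⟨k.val, ZMod.val_lt k⟩
      left_inv := fun i => Fin.ext (ZMod.val_cast_of_lt i.isLt)
      right_inv := fun k => ZMod.natCast_rightInverse k }
  let η : Fin q ≃ B := ι.trans (Multiplicative.ofAdd.trans e.toEquiv)
  have hχη : ∀ j : Fin q, χ (η j) = ζ ^ (j : ℕ) := by
    intro j
    simpa [η, ι, ZMod.val_cast_of_lt j.isLt] using hχ (((j : ℕ) : ZMod q))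
  have hcardB : Fintype.card B = q := by
    rw [← Fintype.card_congr e.toEquiv]
    simp [ZMod.card]
  -- injectivity
  have hinj : Function.Injective (Phi F q χ) := by
    rw [injective_iff_map_eq_zero]
    intro x hx
    set v : Fin q → F := fun i => (ζ : F) ^ (i : ℕ) with hv
    have hvinj : Function.Injective v := by
      intro i j hij
      have h1 : ζ ^ (i : ℕ) = ζ ^ (j : ℕ) :=
        Units.ext (by simpa [v, Units.val_pow_eq_pow_val] using hij)
      have h2 := pow_eq_pow_iff_modEq.mp h1
      rw [hζ] at h2
      exact Fin.ext (by
        simpa [Nat.ModEq, Nat.mod_eq_of_lt i.isLt, Nat.mod_eq_of_lt j.isLt] using h2)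
    set a : Fin q → F := fun j => x.coeff (η j) with ha
    have hM : (Matrix.vandermonde v).mulVec a = 0 := by
      funext i
      have h1 : Phi F q χ x (((i : ℕ) : ZMod q)) = 0 := by rw [hx]; rfl
      rw [Phi_apply] at h1
      calc (Matrix.vandermonde v).mulVec a i = ∑ j : Fin q, v i ^ (j : ℕ) * a j := by
            simp [Matrix.mulVec, dotProduct, Matrix.vandermonde]
        _ = ∑ b : B, x.coeff b * (χ b : F) ^ (((i : ℕ) : ZMod q)).val := by
            apply Fintype.sum_equiv η
            intro j
            have hpow : v i ^ (j : ℕ) = ((χ (η j) : F)) ^ ((((i : ℕ) : ZMod q)).val) := by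
              rw [hχη j, ZMod.val_cast_of_lt i.isLt, Units.val_pow_eq_pow_val]
              simp only [hv]
              rw [← pow_mul, ← pow_mul, Nat.mul_comm]
            rw [hpow, mul_comm]
        _ = 0 := h1
    have ha0 : a = 0 :=
      Matrix.eq_zero_of_mulVec_eq_zero
        (by rw [Matrix.det_vandermonde_ne_zero_iff]; exact hvinj) hM
    ext b
    have hb := congrFun ha0 (η.symm b)
    simpa [ha, Equiv.apply_symm_apply] using hb
  -- surjectivity via dimension count
  haveI : Module.Finite F (MonoidAlgebra F B) :=
    Module.Finite.of_basis (MonoidAlgebra.basis B F)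
  have hb : Module.finrank F (MonoidAlgebra F B) = Fintype.card B :=
    Module.finrank_eq_card_basis (MonoidAlgebra.basis B F)
  have hrank : Module.finrank F (MonoidAlgebra F B) = Module.finrank F (ZMod q → F) := by
    rw [hb, hcardB, Module.finrank_pi, ZMod.card]
  refine ⟨hinj, ?_⟩
  have := (LinearMap.injective_iff_surjective_of_finrank_eq_finrank
    (f := (Phi F q χ).toLinearMap) hrank).mp (by exact hinj)
  exact this

end Phi

section NegSym

variable (q : ℕ) (G : Type*) [CommGroup G]

/-- The subgroup of `ZMod q → G` of "unitary-like" tuples. -/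
noncomputable def negSym : Subgroup (ZMod q → G) where
  carrier := {v | v 0 = 1 ∧ ∀ k, v (-k) = (v k)⁻¹}
  one_mem' := ⟨rfl, by simp⟩
  mul_mem' := fun ha hb => ⟨by simp [ha.1, hb.1], fun k => by
    simp [Pi.mul_apply, ha.2 k, hb.2 k, mul_inv, mul_comm]⟩
  inv_mem' := fun ha => ⟨by simp [ha.1], fun k => by simp [ha.2 k]⟩

lemma mem_negSym (v : ZMod q → G) : v ∈ negSym q G ↔ v 0 = 1 ∧ ∀ k, v (-k) = (v k)⁻¹ :=
  Iff.rfl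

noncomputable def negSymEquiv (m : ℕ) (hqm : q = 2 * m + 1) : negSym q G ≃* (Fin m → G) := by
  haveI : NeZero q := ⟨by omega⟩
  refine MulEquiv.ofBijective
    (⟨⟨fun v i => (v : ZMod q → G) (((i : ℕ) + 1 : ℕ) : ZMod q), rfl⟩,
      fun v w => rfl⟩ : negSym q G →* (Fin m → G)) ⟨?_, ?_⟩
  · intro v w h
    have h' : ∀ i : Fin m, (v : ZMod q → G) (((i : ℕ) + 1 : ℕ) : ZMod q)
        = (w : ZMod q → G) (((i : ℕ) + 1 : ℕ) : ZMod q) := fun i => congrFun h i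
    have key : ∀ k : ZMod q, k ≠ 0 → k.val ≤ m →
        (v : ZMod q → G) k = (w : ZMod q → G) k := by
      intro k hk0 hkm
      have hkv : k.val ≠ 0 := fun hh => hk0 ((ZMod.val_eq_zero k).mp hh)
      have hlt : k.val - 1 < m := by omega
      have hk : ((((⟨k.val - 1, hlt⟩ : Fin m) : ℕ) + 1 : ℕ) : ZMod q) = k := by
        have h2 : ((⟨k.val - 1, hlt⟩ : Fin m) : ℕ) + 1 = k.val := by
          show k.val - 1 + 1 = k.val
          omega
        rw [h2]
        exact ZMod.natCast_rightInverse k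
      have h3 := h' ⟨k.val - 1, hlt⟩
      rwa [hk] at h3
    apply Subtype.ext
    funext k
    rcases eq_or_ne k 0 with rfl | hk0
    · rw [v.2.1, w.2.1]
    · by_cases hkm : k.val ≤ m
      · exact key k hk0 hkm
      · have hneg : (-k).val = q - k.val := by rw [ZMod.neg_val]; simp [hk0]
        have hklt : k.val < q := ZMod.val_lt k
        have hkv : k.val ≠ 0 := fun hh => hk0 ((ZMod.val_eq_zero k).mp hh)
        have h1 : (-k) ≠ 0 := by simpa [neg_eq_zero] using hk0
        have h2 : (-k).val ≤ m := by omega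
        have hv := v.2.2 (-k)
        have hw := w.2.2 (-k)
        rw [neg_neg] at hv hw
        rw [hv, hw, key (-k) h1 h2]
  · intro wf
    have hvb : ∀ k : ZMod q, ¬ k.val = 0 → k.val ≤ m → k.val - 1 < m := by
      intro k h0 h1; omega
    have hvb2 : ∀ k : ZMod q, ¬ k.val = 0 → ¬ k.val ≤ m → q - k.val - 1 < m := by
      intro k h0 h1
      have := ZMod.val_lt k
      omega
    set g : ZMod q → G := fun k =>
      if h0 : k.val = 0 then 1
      else if h1 : k.val ≤ m then wf ⟨k.val - 1, hvb k h0 h1⟩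
      else (wf ⟨q - k.val - 1, hvb2 k h0 h1⟩)⁻¹ with hg
    have hg0 : g 0 = 1 := by simp [hg, ZMod.val_zero]
    have hgneg : ∀ k : ZMod q, g (-k) = (g k)⁻¹ := by
      intro k
      rcases eq_or_ne k 0 with rfl | hk0
      · rw [neg_zero, hg0, inv_one]
      · have hkv : k.val ≠ 0 := fun hh => hk0 ((ZMod.val_eq_zero k).mp hh)
        have hneg : (-k).val = q - k.val := by rw [ZMod.neg_val]; simp [hk0]
        have hklt : k.val < q := ZMod.val_lt k
        have hnegne : (-k).val ≠ 0 := by omega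
        by_cases h1 : k.val ≤ m
        · have h2 : ¬ ((-k).val ≤ m) := by omega
          rw [hg]
          simp only [dif_neg hnegne, dif_neg h2, dif_neg hkv, dif_pos h1]
          have hidx : q - (-k).val - 1 = k.val - 1 := by omega
          congr 2
          exact Fin.ext (by simp [hidx])
        · have h2 : (-k).val ≤ m := by omega
          rw [hg]
          simp only [dif_neg hnegne, dif_pos h2, dif_neg hkv, dif_neg h1, inv_inv]
          have hidx : (-k).val - 1 = q - k.val - 1 := by omega
          congr 1
          exact Fin.ext (by simp [hidx])
    refine ⟨⟨g, hg0, hgneg⟩, ?_⟩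
    funext i
    show g (((i : ℕ) + 1 : ℕ) : ZMod q) = wf i
    have hval : ((((i : ℕ) + 1 : ℕ)) : ZMod q).val = (i : ℕ) + 1 :=
      ZMod.val_cast_of_lt (by have := i.isLt; omega)
    have h0 : ¬ ((((i : ℕ) + 1 : ℕ)) : ZMod q).val = 0 := by omega
    have h1 : ((((i : ℕ) + 1 : ℕ)) : ZMod q).val ≤ m := by
      have := i.isLt; omega
    rw [hg]
    simp only [dif_neg h0, dif_pos h1]
    congr 1
    have hfin : ((((i : ℕ) + 1 : ℕ)) : ZMod q).val - 1 = (i : ℕ) := by rw [hval]; omega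
    exact Fin.ext hfin

end NegSym

theorem stmt3 (p q f : ℕ) (hp : p.Prime) (hq : q.Prime) (hqodd : Odd q)
    (F : Type*) [Field F] [Fintype F] (hF : Fintype.card F = p ^ f) (hF3 : 3 < p ^ f)
    (hdvd : q ∣ p ^ f - 1)
    (B : Type*) [Group B] [IsCyclic B] (hB : Nat.card B = q) :
    ∃ H : Subgroup (MonoidAlgebra F B)ˣ,
      (H : Set (MonoidAlgebra F B)ˣ) =
        {u | u ∈ normUnits F B ∧ invo F B (u : MonoidAlgebra F B) = ((u⁻¹ : (MonoidAlgebra F B)ˣ) : MonoidAlgebra F B)} ∧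
      Nat.card H = (p ^ f - 1) ^ ((q - 1) / 2) ∧
      Nonempty (H ≃* (Fin ((q - 1) / 2) → Multiplicative (ZMod (p ^ f - 1)))) := by
  classical
  obtain ⟨m, hm⟩ := hqodd
  have hq2 : 2 ≤ q := hq.two_le
  have hqm : q = 2 * m + 1 := by omega
  haveI : NeZero q := ⟨by omega⟩
  haveI : Fact q.Prime := ⟨hq⟩
  haveI : NeZero (p ^ f - 1) := ⟨by omega⟩
  haveI : Finite B := Nat.finite_of_card_ne_zero (by omega)
  haveI : Fintype B := Fintype.ofFinite B
  have hcardB : Fintype.card B = q := by rw [← Nat.card_eq_fintype_card, hB]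
  -- the iso of B with ZMod q
  have e : Multiplicative (ZMod q) ≃* B :=
    mulEquivOfCyclicCardEq (by simp [hB, Nat.card_eq_fintype_card, ZMod.card, hcardB])
  -- a primitive q-th root of unity in F
  obtain ⟨ζ, hζ⟩ : ∃ ζ : Fˣ, orderOf ζ = q := by
    apply exists_prime_orderOf_dvd_card q
    rwa [Fintype.card_units, hF]
  have hζq : ζ ^ q = 1 := by rw [← hζ, pow_orderOf_eq_one]
  -- the character
  set χ : B →* Fˣ := (zmodPowHom q ζ hζq).comp e.symm.toMonoidHom with hχdef
  have hχ : ∀ k : ZMod q, χ (e (Multiplicative.ofAdd k)) = ζ ^ k.val := by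
    intro k
    simp [hχdef, zmodPowHom]
  have hord : ∀ b : B, (χ b) ^ q = 1 := by
    intro b
    show (ζ ^ _) ^ q = 1
    rw [← pow_mul, mul_comm, pow_mul, hζq, one_pow]
  have hbij := Phi_bijective F q χ e ζ hζ hχ
  set Ψ : MonoidAlgebra F B ≃ₐ[F] (ZMod q → F) := AlgEquiv.ofBijective (Phi F q χ) hbij with hΨdef
  set E : (MonoidAlgebra F B)ˣ ≃* (ZMod q → Fˣ) :=
    (Units.mapEquiv Ψ.toMulEquiv).trans piUnitsEquiv with hEdef
  have hval : ∀ (u : (MonoidAlgebra F B)ˣ) (k : ZMod q),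
      ((E u k : Fˣ) : F) = Phi F q χ (u : MonoidAlgebra F B) k := fun u k => rfl
  -- membership translations
  have hnorm : ∀ u : (MonoidAlgebra F B)ˣ,
      u ∈ normUnits F B ↔ aug F B (u : MonoidAlgebra F B) = 1 := by
    intro u
    rw [normUnits, MonoidHom.mem_ker, Units.ext_iff]
    simp
  have hiff : ∀ u : (MonoidAlgebra F B)ˣ, E u ∈ negSym q Fˣ ↔
      (u ∈ normUnits F B ∧ invo F B (u : MonoidAlgebra F B)
        = ((u⁻¹ : (MonoidAlgebra F B)ˣ) : MonoidAlgebra F B)) := by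
    intro u
    rw [mem_negSym, hnorm]
    constructor
    · rintro ⟨h0, hneg⟩
      constructor
      · rw [← Phi_zero_eq_aug F q χ, ← hval u 0, h0, Units.val_one]
      · apply hbij.1
        funext k
        rw [Phi_invo F q χ hord, ← hval u (-k), hneg k, ← hval u⁻¹ k]
        rw [map_inv]
        rfl
    · rintro ⟨h0, hinv⟩
      constructor
      · apply Units.ext
        rw [Units.val_one, hval u 0, Phi_zero_eq_aug F q χ, h0]
      · intro k
        apply Units.ext
        have : Phi F q χ (invo F B (u : MonoidAlgebra F B)) k
            = Phi F q χ ((u⁻¹ : (MonoidAlgebra F B)ˣ) : MonoidAlgebra F B) k := by rw [hinv]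
        rw [Phi_invo F q χ hord] at this
        rw [show ((E u (-k) : Fˣ) : F) = _ from hval u (-k), this, ← hval u⁻¹ k, map_inv]
        rfl
  have eF : Fˣ ≃* Multiplicative (ZMod (p ^ f - 1)) :=
    (mulEquivOfCyclicCardEq (G := Multiplicative (ZMod (p ^ f - 1))) (G' := Fˣ)
      (by simp [Nat.card_eq_fintype_card, ZMod.card, Nat.card_units, Fintype.card_units, hF, eq_comm])).symm
  have iso : ((negSym q Fˣ).comap E.toMonoidHom) ≃* (Fin m → Multiplicative (ZMod (p ^ f - 1))) :=
    (((Subgroup.equivMapOfInjective _ E.toMonoidHom (MulEquiv.injective E)).trans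
      (MulEquiv.subgroupCongr (Subgroup.map_comap_eq_self_of_surjective (MulEquiv.surjective E) _))).trans
      (negSymEquiv q Fˣ m hqm)).trans (MulEquiv.piCongrRight fun _ => eF)
  have hm2 : (q - 1) / 2 = m := by omega
  refine ⟨(negSym q Fˣ).comap E.toMonoidHom, ?_, ?_, ?_⟩
  · ext u
    simpa [Subgroup.mem_comap] using hiff u
  · rw [Nat.card_congr iso.toEquiv, hm2]
    simp [Nat.card_eq_fintype_card, ZMod.card]
  · rw [hm2]
    exact ⟨iso⟩
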